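/- Let (Θ, F_Θ, π) and (Ω, F_Ω, ν) be probability spaces, and let f₁, f₂ : Θ × Ω → ℝ (first-party, settings a₁, a₂) and g₁, g₂ : Θ × Ω → ℝ (second-party, settings b₁, b₂) be measurable functions bounded in absolute value by 1. Define correlations E(k,m) = ∫∫ f_k(θ,ω) g_m(θ,ω) dν(ω) dπ(θ). Then for any real |γ_{km}| ≤ 1 with γ₁₁γ₁₂ = -γ₂₁γ₂₂, we have |Σ_{k,m} γ_{km} E(k,m)| ≤ 2. -/

import Mathlib

open MeasureTheory

lemma abs_add_abs_le (x y : ℝ) : |x| + |y| ≤ max (|x + y|) (|x - y|) := by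
  rcases le_total 0 x with hx | hx <;> rcases le_total 0 y with hy | hy
  · refine le_max_of_le_left ?_
    rw [abs_of_nonneg hx, abs_of_nonneg hy]; exact le_abs_self _
  · refine le_max_of_le_right ?_
    rw [abs_of_nonneg hx, abs_of_nonpos hy]; exact le_abs_self _
  · refine le_max_of_le_right ?_
    rw [abs_of_nonpos hx, abs_of_nonneg hy]
    exact (neg_le_abs _).trans' (by linarith)
  · refine le_max_of_le_left ?_
    rw [abs_of_nonpos hx, abs_of_nonpos hy]
    exact (neg_le_abs _).trans' (by linarith)

lemma chsh_key (a b c d u v : ℝ) (ha : |a| ≤ 1) (hb : |b| ≤ 1) (hc : |c| ≤ 1) (hd : |d| ≤ 1)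
    (hu : |u| ≤ 1) (hv : |v| ≤ 1) (h : a * b = -(c * d)) :
    |a * u + b * v| + |c * u + d * v| ≤ 2 := by
  obtain ⟨ha1, ha2⟩ := abs_le.mp ha
  obtain ⟨hb1, hb2⟩ := abs_le.mp hb
  obtain ⟨hc1, hc2⟩ := abs_le.mp hc
  obtain ⟨hd1, hd2⟩ := abs_le.mp hd
  have p1 : (0:ℝ) ≤ (1 - a) * (1 - b) := mul_nonneg (by linarith) (by linarith)
  have p2 : (0:ℝ) ≤ (1 - a) * (1 + b) := mul_nonneg (by linarith) (by linarith)
  have p3 : (0:ℝ) ≤ (1 + a) * (1 - b) := mul_nonneg (by linarith) (by linarith)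
  have p4 : (0:ℝ) ≤ (1 + a) * (1 + b) := mul_nonneg (by linarith) (by linarith)
  have q1 : (0:ℝ) ≤ (1 - c) * (1 - d) := mul_nonneg (by linarith) (by linarith)
  have q2 : (0:ℝ) ≤ (1 - c) * (1 + d) := mul_nonneg (by linarith) (by linarith)
  have q3 : (0:ℝ) ≤ (1 + c) * (1 - d) := mul_nonneg (by linarith) (by linarith)
  have q4 : (0:ℝ) ≤ (1 + c) * (1 + d) := mul_nonneg (by linarith) (by linarith)
  have h1 : |a + c| + |b + d| ≤ 2 := by
    rcases abs_cases (a + c) with ⟨e1, _⟩ | ⟨e1, _⟩ <;>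
    rcases abs_cases (b + d) with ⟨e2, _⟩ | ⟨e2, _⟩ <;> rw [e1, e2] <;> linarith
  have h2 : |a - c| + |b - d| ≤ 2 := by
    rcases abs_cases (a - c) with ⟨e1, _⟩ | ⟨e1, _⟩ <;>
    rcases abs_cases (b - d) with ⟨e2, _⟩ | ⟨e2, _⟩ <;> rw [e1, e2] <;> linarith
  have hpq : ∀ s t : ℝ, |s * u + t * v| ≤ |s| + |t| := by
    intro s t
    calc |s * u + t * v| ≤ |s * u| + |t * v| := abs_add_le _ _
      _ = |s| * |u| + |t| * |v| := by rw [abs_mul, abs_mul]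
      _ ≤ |s| * 1 + |t| * 1 := by gcongr
      _ = |s| + |t| := by ring
  have hmax := abs_add_abs_le (a * u + b * v) (c * u + d * v)
  have e1 : a * u + b * v + (c * u + d * v) = (a + c) * u + (b + d) * v := by ring
  have e2 : a * u + b * v - (c * u + d * v) = (a - c) * u + (b - d) * v := by ring
  rw [e1, e2] at hmax
  exact hmax.trans (max_le ((hpq _ _).trans h1) ((hpq _ _).trans h2))

theorem extended_CHSH_factorizable {Θ Ω : Type*} [MeasurableSpace Θ] [MeasurableSpace Ω]
    (π : Measure Θ) [IsProbabilityMeasure π]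
    (ν : Measure Ω) [IsProbabilityMeasure ν]
    (f₁ f₂ g₁ g₂ : Θ × Ω → ℝ)
    (hf₁m : Measurable f₁) (hf₂m : Measurable f₂)
    (hg₁m : Measurable g₁) (hg₂m : Measurable g₂)
    (hf₁ : ∀ p, |f₁ p| ≤ 1) (hf₂ : ∀ p, |f₂ p| ≤ 1)
    (hg₁ : ∀ p, |g₁ p| ≤ 1) (hg₂ : ∀ p, |g₂ p| ≤ 1)
    (γ₁₁ γ₁₂ γ₂₁ γ₂₂ : ℝ)
    (h₁₁ : |γ₁₁| ≤ 1) (h₁₂ : |γ₁₂| ≤ 1) (h₂₁ : |γ₂₁| ≤ 1) (h₂₂ : |γ₂₂| ≤ 1)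
    (hγ : γ₁₁ * γ₁₂ = -(γ₂₁ * γ₂₂)) :
    |γ₁₁ * (∫ θ, ∫ ω, f₁ (θ, ω) * g₁ (θ, ω) ∂ν ∂π) +
     γ₁₂ * (∫ θ, ∫ ω, f₁ (θ, ω) * g₂ (θ, ω) ∂ν ∂π) +
     γ₂₁ * (∫ θ, ∫ ω, f₂ (θ, ω) * g₁ (θ, ω) ∂ν ∂π) +
     γ₂₂ * (∫ θ, ∫ ω, f₂ (θ, ω) * g₂ (θ, ω) ∂ν ∂π)| ≤ 2 := by
  -- pointwise bound on the combination
  set F : Θ × Ω → ℝ := fun p =>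
    γ₁₁ * (f₁ p * g₁ p) + γ₁₂ * (f₁ p * g₂ p) + γ₂₁ * (f₂ p * g₁ p) + γ₂₂ * (f₂ p * g₂ p)
    with hF
  have hFbound : ∀ p, |F p| ≤ 2 := by
    intro p
    have hk := chsh_key γ₁₁ γ₁₂ γ₂₁ γ₂₂ (g₁ p) (g₂ p) h₁₁ h₁₂ h₂₁ h₂₂ (hg₁ p) (hg₂ p) hγ
    have e : F p = f₁ p * (γ₁₁ * g₁ p + γ₁₂ * g₂ p) + f₂ p * (γ₂₁ * g₁ p + γ₂₂ * g₂ p) := by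
      simp only [hF]; ring
    calc |F p| ≤ |f₁ p * (γ₁₁ * g₁ p + γ₁₂ * g₂ p)| + |f₂ p * (γ₂₁ * g₁ p + γ₂₂ * g₂ p)| := by
          rw [e]; exact abs_add_le _ _
      _ = |f₁ p| * |γ₁₁ * g₁ p + γ₁₂ * g₂ p| + |f₂ p| * |γ₂₁ * g₁ p + γ₂₂ * g₂ p| := by
          rw [abs_mul, abs_mul]
      _ ≤ 1 * |γ₁₁ * g₁ p + γ₁₂ * g₂ p| + 1 * |γ₂₁ * g₁ p + γ₂₂ * g₂ p| := by
          gcongr <;> [exact hf₁ p; exact hf₂ p]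
      _ = |γ₁₁ * g₁ p + γ₁₂ * g₂ p| + |γ₂₁ * g₁ p + γ₂₂ * g₂ p| := by ring
      _ ≤ 2 := hk
  have hFm : Measurable F := by
    apply Measurable.add
    apply Measurable.add
    apply Measurable.add
    · exact (measurable_const.mul (hf₁m.mul hg₁m))
    · exact (measurable_const.mul (hf₁m.mul hg₂m))
    · exact (measurable_const.mul (hf₂m.mul hg₁m))
    · exact (measurable_const.mul (hf₂m.mul hg₂m))
  -- sections are integrable
  have hsec : ∀ (h : Θ × Ω → ℝ), Measurable h → (∀ p, |h p| ≤ (1:ℝ)) →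
      ∀ θ, Integrable (fun ω => h (θ, ω)) ν := by
    intro h hm hb θ
    exact (integrable_const (1:ℝ)).mono'
      ((hm.comp measurable_prodMk_left).aestronglyMeasurable)
      (ae_of_all _ fun ω => by simpa [Real.norm_eq_abs] using hb (θ, ω))
  have hsec11 := hsec _ (hf₁m.mul hg₁m) (fun p => by
    rw [Pi.mul_apply, abs_mul]; calc |f₁ p| * |g₁ p| ≤ 1 * 1 := by gcongr <;> [exact hf₁ p; exact hg₁ p]
                   _ = 1 := by ring)
  have hsec12 := hsec _ (hf₁m.mul hg₂m) (fun p => by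
    rw [Pi.mul_apply, abs_mul]; calc |f₁ p| * |g₂ p| ≤ 1 * 1 := by gcongr <;> [exact hf₁ p; exact hg₂ p]
                   _ = 1 := by ring)
  have hsec21 := hsec _ (hf₂m.mul hg₁m) (fun p => by
    rw [Pi.mul_apply, abs_mul]; calc |f₂ p| * |g₁ p| ≤ 1 * 1 := by gcongr <;> [exact hf₂ p; exact hg₁ p]
                   _ = 1 := by ring)
  have hsec22 := hsec _ (hf₂m.mul hg₂m) (fun p => by
    rw [Pi.mul_apply, abs_mul]; calc |f₂ p| * |g₂ p| ≤ 1 * 1 := by gcongr <;> [exact hf₂ p; exact hg₂ p]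
                   _ = 1 := by ring)
  -- combine inner integrals
  have hinner : ∀ θ,
      γ₁₁ * (∫ ω, f₁ (θ, ω) * g₁ (θ, ω) ∂ν) + γ₁₂ * (∫ ω, f₁ (θ, ω) * g₂ (θ, ω) ∂ν) +
      γ₂₁ * (∫ ω, f₂ (θ, ω) * g₁ (θ, ω) ∂ν) + γ₂₂ * (∫ ω, f₂ (θ, ω) * g₂ (θ, ω) ∂ν) =
      ∫ ω, F (θ, ω) ∂ν := by
    intro θ
    symm
    simp only [hF]
    have I1 : Integrable (fun ω => γ₁₁ * (f₁ (θ, ω) * g₁ (θ, ω))) ν := (hsec11 θ).const_mul _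
    have I2 : Integrable (fun ω => γ₁₂ * (f₁ (θ, ω) * g₂ (θ, ω))) ν := (hsec12 θ).const_mul _
    have I3 : Integrable (fun ω => γ₂₁ * (f₂ (θ, ω) * g₁ (θ, ω))) ν := (hsec21 θ).const_mul _
    have I4 : Integrable (fun ω => γ₂₂ * (f₂ (θ, ω) * g₂ (θ, ω))) ν := (hsec22 θ).const_mul _
    have I12 : Integrable (fun ω => γ₁₁ * (f₁ (θ, ω) * g₁ (θ, ω)) +
        γ₁₂ * (f₁ (θ, ω) * g₂ (θ, ω))) ν := I1.add I2
    have I123 : Integrable (fun ω => γ₁₁ * (f₁ (θ, ω) * g₁ (θ, ω)) +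
        γ₁₂ * (f₁ (θ, ω) * g₂ (θ, ω)) + γ₂₁ * (f₂ (θ, ω) * g₁ (θ, ω))) ν := I12.add I3
    rw [integral_add I123 I4, integral_add I12 I3, integral_add I1 I2,
      integral_const_mul, integral_const_mul, integral_const_mul, integral_const_mul]
  -- integrability of inner-integral functions over π
  have houter : ∀ (h : Θ × Ω → ℝ), Measurable h → (∀ p, |h p| ≤ (1:ℝ)) →
      Integrable (fun θ => ∫ ω, h (θ, ω) ∂ν) π := by
    intro h hm hb
    refine (integrable_const (1:ℝ)).mono'
      (hm.stronglyMeasurable.integral_prod_right'.aestronglyMeasurable)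
      (ae_of_all _ fun θ => ?_)
    have := norm_integral_le_of_norm_le_const (μ := ν) (C := 1)
      (ae_of_all _ fun ω => by rw [Real.norm_eq_abs]; exact hb (θ, ω))
    simpa using this
  have hout11 := houter _ (hf₁m.mul hg₁m) (fun p => by
    rw [Pi.mul_apply, abs_mul]; calc |f₁ p| * |g₁ p| ≤ 1 * 1 := by gcongr <;> [exact hf₁ p; exact hg₁ p]
                   _ = 1 := by ring)
  have hout12 := houter _ (hf₁m.mul hg₂m) (fun p => by
    rw [Pi.mul_apply, abs_mul]; calc |f₁ p| * |g₂ p| ≤ 1 * 1 := by gcongr <;> [exact hf₁ p; exact hg₂ p]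
                   _ = 1 := by ring)
  have hout21 := houter _ (hf₂m.mul hg₁m) (fun p => by
    rw [Pi.mul_apply, abs_mul]; calc |f₂ p| * |g₁ p| ≤ 1 * 1 := by gcongr <;> [exact hf₂ p; exact hg₁ p]
                   _ = 1 := by ring)
  have hout22 := houter _ (hf₂m.mul hg₂m) (fun p => by
    rw [Pi.mul_apply, abs_mul]; calc |f₂ p| * |g₂ p| ≤ 1 * 1 := by gcongr <;> [exact hf₂ p; exact hg₂ p]
                   _ = 1 := by ring)
  -- combine outer integrals
  have hcomb :
      γ₁₁ * (∫ θ, ∫ ω, f₁ (θ, ω) * g₁ (θ, ω) ∂ν ∂π) +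
      γ₁₂ * (∫ θ, ∫ ω, f₁ (θ, ω) * g₂ (θ, ω) ∂ν ∂π) +
      γ₂₁ * (∫ θ, ∫ ω, f₂ (θ, ω) * g₁ (θ, ω) ∂ν ∂π) +
      γ₂₂ * (∫ θ, ∫ ω, f₂ (θ, ω) * g₂ (θ, ω) ∂ν ∂π) = ∫ θ, ∫ ω, F (θ, ω) ∂ν ∂π := by
    symm
    have J1 : Integrable (fun θ => γ₁₁ * ∫ ω, f₁ (θ, ω) * g₁ (θ, ω) ∂ν) π := hout11.const_mul _
    have J2 : Integrable (fun θ => γ₁₂ * ∫ ω, f₁ (θ, ω) * g₂ (θ, ω) ∂ν) π := hout12.const_mul _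
    have J3 : Integrable (fun θ => γ₂₁ * ∫ ω, f₂ (θ, ω) * g₁ (θ, ω) ∂ν) π := hout21.const_mul _
    have J4 : Integrable (fun θ => γ₂₂ * ∫ ω, f₂ (θ, ω) * g₂ (θ, ω) ∂ν) π := hout22.const_mul _
    have J12 : Integrable (fun θ => γ₁₁ * ∫ ω, f₁ (θ, ω) * g₁ (θ, ω) ∂ν +
        γ₁₂ * ∫ ω, f₁ (θ, ω) * g₂ (θ, ω) ∂ν) π := J1.add J2
    have J123 : Integrable (fun θ => γ₁₁ * ∫ ω, f₁ (θ, ω) * g₁ (θ, ω) ∂ν +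
        γ₁₂ * ∫ ω, f₁ (θ, ω) * g₂ (θ, ω) ∂ν + γ₂₁ * ∫ ω, f₂ (θ, ω) * g₁ (θ, ω) ∂ν) π := J12.add J3
    rw [integral_congr_ae (ae_of_all _ fun θ => (hinner θ).symm),
      integral_add J123 J4, integral_add J12 J3, integral_add J1 J2,
      integral_const_mul, integral_const_mul, integral_const_mul, integral_const_mul]
  rw [hcomb]
  have hstep : ‖∫ θ, ∫ ω, F (θ, ω) ∂ν ∂π‖ ≤ 2 * (π Set.univ).toReal := by
    refine norm_integral_le_of_norm_le_const (ae_of_all _ fun θ => ?_)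
    have hin : ‖∫ ω, F (θ, ω) ∂ν‖ ≤ 2 * (ν Set.univ).toReal :=
      norm_integral_le_of_norm_le_const (ae_of_all _ fun ω => by
        rw [Real.norm_eq_abs]; exact hFbound (θ, ω))
    simpa using hin
  rw [← Real.norm_eq_abs]
  simpa using hstep
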